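/- Let R > 0 and let φ : [−R,R] → ℝ be continuously differentiable with all integrals below finite. Writing ⟨φ⟩ = (1/(2R)) ∫_{−R}^R φ(v) dv for the average of φ over (−R,R), the weighted Poincaré-type inequality ∫_{−R}^R (φ(w) − ⟨φ⟩)² dw ≤ (1/2) ∫_{−R}^R (R² − w²) |φ′(w)|² dw holds. -/

import Mathlib

open MeasureTheory Set Filter Topology

set_option maxHeartbeats 1000000

/-- Auxiliary: a function bounded on a finite-measure measurable set and a.e. strongly
measurable there is integrable on it. -/
lemma wp_integrableOn_of_bdd {f : ℝ → ℝ} {s : Set ℝ} (hs : MeasurableSet s)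
    (hμ : volume s ≠ ⊤) (hm : AEStronglyMeasurable f (volume.restrict s))
    {M : ℝ} (hb : ∀ x ∈ s, |f x| ≤ M) : IntegrableOn f s := by
  refine ⟨hm, HasFiniteIntegral.restrict_of_bounded (C := M) hμ.lt_top ?_⟩
  filter_upwards [ae_restrict_mem hs] with x hx using hb x hx

/-- Weighted Poincaré-type inequality on `(-R,R)` with weight `R² - w²` and
sharp constant `1/2` (inequality (p-Po) of the paper). -/
theorem weighted_poincare
    (R : ℝ) (φ φ' : ℝ → ℝ) (hR : 0 < R)
    (hderiv : ∀ w ∈ Icc (-R) R, HasDerivAt φ (φ' w) w)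
    (hcont : ContinuousOn φ' (Icc (-R) R))
    (hφ : IntegrableOn φ (Ioo (-R) R))
    (hφ2 : IntegrableOn (fun w => (φ w - (1 / (2 * R)) * ∫ v in Ioo (-R) R, φ v) ^ 2)
      (Ioo (-R) R))
    (hw : IntegrableOn (fun w => (R ^ 2 - w ^ 2) * (φ' w) ^ 2) (Ioo (-R) R)) :
    ∫ w in Ioo (-R) R, (φ w - (1 / (2 * R)) * ∫ v in Ioo (-R) R, φ v) ^ 2
      ≤ (1 / 2) * ∫ w in Ioo (-R) R, (R ^ 2 - w ^ 2) * (φ' w) ^ 2 := by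
  have hRR : -R < R := by linarith
  obtain ⟨m, hmdef⟩ : ∃ m : ℝ, m = (1 / (2 * R)) * ∫ v in Ioo (-R) R, φ v := ⟨_, rfl⟩
  rw [← hmdef] at hφ2 ⊢
  obtain ⟨ψ, hψdef⟩ : ∃ ψ : ℝ → ℝ, ψ = fun t => φ t - m := ⟨_, rfl⟩
  have hψ2 : IntegrableOn (fun w => ψ w ^ 2) (Ioo (-R) R) := by
    simp only [hψdef]; exact hφ2
  have hvol : volume (Ioo (-R) R) ≠ ⊤ := by simp [Real.volume_Ioo]
  -- continuity
  have hφc : ContinuousOn φ (Icc (-R) R) :=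
    fun x hx => ((hderiv x hx).continuousAt).continuousWithinAt
  have hψc : ContinuousOn ψ (Icc (-R) R) := by
    rw [hψdef]; exact hφc.sub continuousOn_const
  -- integrability of ψ, mean zero
  have hconst : IntegrableOn (fun _ : ℝ => m) (Ioo (-R) R) :=
    integrableOn_const hvol
  have hψint : IntegrableOn ψ (Ioo (-R) R) := by
    rw [hψdef]; exact hφ.sub hconst
  have hψ0 : ∫ t in Ioo (-R) R, ψ t = 0 := by
    simp only [hψdef]
    rw [integral_sub hφ hconst, setIntegral_const, Real.volume_real_Ioo_of_le hRR.le, smul_eq_mul]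
    rw [hmdef]
    field_simp
    ring
  -- bounds on ψ, φ, φ'
  obtain ⟨Cψ, hCψ⟩ := isCompact_Icc.exists_bound_of_continuousOn hψc
  obtain ⟨Cp, hCp⟩ := isCompact_Icc.exists_bound_of_continuousOn hφc
  obtain ⟨Cd, hCd⟩ := isCompact_Icc.exists_bound_of_continuousOn hcont
  have hCψ0 : 0 ≤ Cψ := le_trans (norm_nonneg _) (hCψ 0 (by constructor <;> linarith))
  have hCp0 : 0 ≤ Cp := le_trans (norm_nonneg _) (hCp 0 (by constructor <;> linarith))
  have hCd0 : 0 ≤ Cd := le_trans (norm_nonneg _) (hCd 0 (by constructor <;> linarith))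
  -- the primitive F
  have hψii : ∀ u v, u ∈ Icc (-R) R → v ∈ Icc (-R) R → IntervalIntegrable ψ volume u v :=
    fun u v hu hv => (hψc.mono (uIcc_subset_Icc hu hv)).intervalIntegrable
  have hψb : ∀ u v, u ∈ Icc (-R) R → v ∈ Icc (-R) R → ∀ x ∈ uIoc u v, ‖ψ x‖ ≤ Cψ :=
    fun u v hu hv x hx => hCψ x (uIcc_subset_Icc hu hv (uIoc_subset_uIcc hx))
  have hmemR : R ∈ Icc (-R) R := ⟨hRR.le, le_refl _⟩
  have hmemL : -R ∈ Icc (-R) R := ⟨le_refl _, hRR.le⟩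
  obtain ⟨F, hFdef⟩ : ∃ F : ℝ → ℝ, F = fun w => ∫ t in (-R)..w, ψ t := ⟨_, rfl⟩
  have hFR : F R = 0 := by
    simp only [hFdef]
    rw [intervalIntegral.integral_of_le hRR.le, integral_Ioc_eq_integral_Ioo, hψ0]
  have hFsplit : ∀ t ∈ Icc (-R) R, F t = -∫ s in t..R, ψ s := by
    intro t ht
    have h := intervalIntegral.integral_add_adjacent_intervals
      (hψii _ _ hmemL ht) (hψii _ _ ht hmemR)
    simp only [hFdef] at hFR ⊢
    rw [hFR] at h
    linarith
  have hFb1 : ∀ t ∈ Icc (-R) R, |F t| ≤ Cψ * (t + R) := by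
    intro t ht
    have h := intervalIntegral.norm_integral_le_of_norm_le_const (hψb _ _ hmemL ht)
    rw [abs_of_nonneg (by linarith [ht.1] : (0:ℝ) ≤ t - -R)] at h
    simpa [hFdef] using le_trans h (by ring_nf; rfl)
  have hFb2 : ∀ t ∈ Icc (-R) R, |F t| ≤ Cψ * (R - t) := by
    intro t ht
    have h := intervalIntegral.norm_integral_le_of_norm_le_const (hψb _ _ ht hmemR)
    rw [abs_of_nonneg (by linarith [ht.2] : (0:ℝ) ≤ R - t)] at h
    rw [hFsplit t ht, abs_neg]
    exact h
  have hFb : ∀ t ∈ Icc (-R) R, R * |F t| ≤ Cψ * (R ^ 2 - t ^ 2) := by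
    intro t ht
    rcases le_total t 0 with h0 | h0
    · nlinarith [hFb1 t ht, abs_nonneg (F t), ht.1, ht.2]
    · nlinarith [hFb2 t ht, abs_nonneg (F t), ht.1, ht.2]
  have hFderiv : ∀ w ∈ Ioo (-R) R, HasDerivAt F (ψ w) w := by
    intro w hw
    rw [hFdef]
    apply intervalIntegral.integral_hasDerivAt_right (hψii _ _ hmemL (Ioo_subset_Icc_self hw))
    · exact ⟨Ioo (-R) R, isOpen_Ioo.mem_nhds hw,
        (hψc.mono Ioo_subset_Icc_self).aestronglyMeasurable measurableSet_Ioo⟩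
    · exact hψc.continuousAt (Icc_mem_nhds hw.1 hw.2)
  -- the auxiliary function G and its derivative G'
  have hu : ∀ t ∈ Ioo (-R) R, 0 < R ^ 2 - t ^ 2 := by
    intro t ht; nlinarith [ht.1, ht.2]
  obtain ⟨G, hGdef⟩ : ∃ G : ℝ → ℝ, G = fun t => -(t * F t ^ 2 / (R ^ 2 - t ^ 2)) := ⟨_, rfl⟩
  obtain ⟨G', hG'def⟩ : ∃ g : ℝ → ℝ, g = fun t =>
    -(((F t ^ 2 + 2 * t * F t * ψ t) * (R ^ 2 - t ^ 2) + 2 * t ^ 2 * F t ^ 2)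
      / (R ^ 2 - t ^ 2) ^ 2) := ⟨_, rfl⟩
  have hGderiv : ∀ t ∈ Ioo (-R) R, HasDerivAt G (G' t) t := by
    intro t ht
    have h1 : HasDerivAt (fun t => t * F t ^ 2) (1 * F t ^ 2 + t * (2 * F t ^ 1 * ψ t)) t :=
      (hasDerivAt_id t).mul ((hFderiv t ht).pow 2)
    have h2 : HasDerivAt (fun t : ℝ => R ^ 2 - t ^ 2) (0 - 2 * t ^ 1) t :=
      (hasDerivAt_const t (R ^ 2)).sub (hasDerivAt_pow 2 t)
    have h3 := (h1.div h2 (hu t ht).ne').neg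
    rw [hGdef]
    refine h3.congr_deriv ?_
    simp only [hG'def]
    ring
  have hident : ∀ t ∈ Ioo (-R) R,
      ψ t ^ 2 / 2 - F t ^ 2 / (R ^ 2 - t ^ 2) - G' t
        = (1 / 2) * (ψ t + 2 * t * F t / (R ^ 2 - t ^ 2)) ^ 2 := by
    intro t ht
    have := (hu t ht).ne'
    simp only [hG'def]
    field_simp
    ring
  have hpt : ∀ t ∈ Ioo (-R) R, F t ^ 2 / (R ^ 2 - t ^ 2) ≤ ψ t ^ 2 / 2 - G' t := by
    intro t ht
    nlinarith [hident t ht, sq_nonneg (ψ t + 2 * t * F t / (R ^ 2 - t ^ 2))]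
  -- quantitative bounds
  have hFsq : ∀ t ∈ Ioo (-R) R, F t ^ 2 ≤ Cψ ^ 2 * (R ^ 2 - t ^ 2) := by
    intro t ht
    have h1 := hFb t (Ioo_subset_Icc_self ht)
    have hut := hu t ht
    have h2 : R ^ 2 - t ^ 2 ≤ R ^ 2 := by nlinarith [sq_nonneg t]
    have h3 : (R * |F t|) * (R * |F t|) ≤ (Cψ * (R ^ 2 - t ^ 2)) * (Cψ * (R ^ 2 - t ^ 2)) :=
      mul_le_mul h1 h1 (by positivity) (by positivity)
    have h4 : 0 ≤ Cψ ^ 2 * (R ^ 2 - t ^ 2) * (R ^ 2 - (R ^ 2 - t ^ 2)) :=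
      mul_nonneg (by positivity) (by linarith)
    nlinarith [sq_abs (F t), sq_nonneg R]
  have hF2u : ∀ t ∈ Ioo (-R) R, F t ^ 2 / (R ^ 2 - t ^ 2) ≤ Cψ ^ 2 := by
    intro t ht
    rw [div_le_iff₀ (hu t ht)]
    have h2 : R ^ 2 - t ^ 2 ≤ R ^ 2 := by nlinarith [sq_nonneg t]
    nlinarith [hFsq t ht, hu t ht, sq_nonneg Cψ,
      mul_nonneg (sq_nonneg Cψ) (sub_nonneg.2 h2)]
  have hq : ∀ t ∈ Ioo (-R) R, |2 * t * F t / (R ^ 2 - t ^ 2)| ≤ 2 * Cψ := by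
    intro t ht
    have hut := hu t ht
    rw [abs_div, abs_of_pos hut, div_le_iff₀ hut]
    have h1 := hFb t (Ioo_subset_Icc_self ht)
    have ht' : |t| ≤ R := by rw [abs_le]; exact ⟨ht.1.le, ht.2.le⟩
    calc |2 * t * F t| = 2 * |t| * |F t| := by
          rw [abs_mul, abs_mul]; simp [abs_of_nonneg]
      _ ≤ 2 * R * |F t| := by
          have := abs_nonneg (F t); nlinarith
      _ ≤ 2 * (Cψ * (R ^ 2 - t ^ 2)) := by nlinarith
      _ = 2 * Cψ * (R ^ 2 - t ^ 2) := by ring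
  have hψb' : ∀ t ∈ Ioo (-R) R, |ψ t| ≤ Cψ := fun t ht => hCψ t (Ioo_subset_Icc_self ht)
  have hG'b : ∀ t ∈ Ioo (-R) R, |G' t| ≤ 6 * Cψ ^ 2 := by
    intro t ht
    have h1 := hident t ht
    have h2 := hq t ht
    have h3 := hψb' t ht
    have h4 := hF2u t ht
    have h5 : 0 ≤ F t ^ 2 / (R ^ 2 - t ^ 2) := div_nonneg (sq_nonneg _) (hu t ht).le
    have h6 : (ψ t + 2 * t * F t / (R ^ 2 - t ^ 2)) ^ 2 ≤ 9 * Cψ ^ 2 := by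
      have habs : |ψ t + 2 * t * F t / (R ^ 2 - t ^ 2)| ≤ 3 * Cψ :=
        le_trans (abs_add_le _ _) (by linarith)
      nlinarith [sq_abs (ψ t + 2 * t * F t / (R ^ 2 - t ^ 2)),
        abs_nonneg (ψ t + 2 * t * F t / (R ^ 2 - t ^ 2))]
    have h7 : ψ t ^ 2 ≤ Cψ ^ 2 := by nlinarith [sq_abs (ψ t), abs_nonneg (ψ t)]
    rw [abs_le]
    constructor <;>
      linarith [sq_nonneg (ψ t + 2 * t * F t / (R ^ 2 - t ^ 2)), sq_nonneg (ψ t), sq_nonneg Cψ]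
  -- bound on G towards the endpoints
  have hGb2 : ∀ t ∈ Ioo (-R) R, 0 ≤ t → |G t| ≤ 2 * Cψ ^ 2 * (R - t) := by
    intro t ht ht0
    have hut := hu t ht
    have ht' : |t| ≤ R := by rw [abs_le]; exact ⟨ht.1.le, ht.2.le⟩
    simp only [hGdef]
    rw [abs_neg, abs_div, abs_of_pos hut, div_le_iff₀ hut, abs_mul,
      abs_of_nonneg (sq_nonneg (F t))]
    have hb2 := hFb2 t (Ioo_subset_Icc_self ht)
    have h1 : F t ^ 2 ≤ (Cψ * (R - t)) ^ 2 := by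
      have := mul_le_mul hb2 hb2 (abs_nonneg _) (by nlinarith [ht.2])
      nlinarith [sq_abs (F t)]
    have h2 : 0 ≤ F t ^ 2 := sq_nonneg _
    have h3 : |t| * F t ^ 2 ≤ R * F t ^ 2 := by nlinarith
    have h4 : 0 ≤ Cψ ^ 2 := sq_nonneg _
    nlinarith [mul_nonneg (mul_nonneg h4 (by linarith [ht.2] : (0:ℝ) ≤ R - t))
      (by linarith [ht.2] : (0:ℝ) ≤ R - t), ht.1, ht.2, mul_nonneg (mul_nonneg h4
      (by linarith [ht.2] : (0:ℝ) ≤ R - t)) ht0]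
  have hGb1 : ∀ t ∈ Ioo (-R) R, t ≤ 0 → |G t| ≤ 2 * Cψ ^ 2 * (t + R) := by
    intro t ht ht0
    have hut := hu t ht
    have ht' : |t| ≤ R := by rw [abs_le]; exact ⟨ht.1.le, ht.2.le⟩
    simp only [hGdef]
    rw [abs_neg, abs_div, abs_of_pos hut, div_le_iff₀ hut, abs_mul,
      abs_of_nonneg (sq_nonneg (F t))]
    have hb1 := hFb1 t (Ioo_subset_Icc_self ht)
    have h1 : F t ^ 2 ≤ (Cψ * (t + R)) ^ 2 := by
      have := mul_le_mul hb1 hb1 (abs_nonneg _) (by nlinarith [ht.1])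
      nlinarith [sq_abs (F t)]
    have h2 : 0 ≤ F t ^ 2 := sq_nonneg _
    have h3 : |t| * F t ^ 2 ≤ R * F t ^ 2 := by nlinarith
    have h4 : 0 ≤ Cψ ^ 2 := sq_nonneg _
    nlinarith [mul_nonneg (mul_nonneg h4 (by linarith [ht.1] : (0:ℝ) ≤ t + R))
      (by linarith [ht.1] : (0:ℝ) ≤ t + R), ht.1, ht.2, mul_nonneg (mul_nonneg h4
      (by linarith [ht.1] : (0:ℝ) ≤ t + R)) (by linarith : (0:ℝ) ≤ -t)]
  -- integrability on (-R, R)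
  have hFc : ContinuousOn F (Ioo (-R) R) :=
    fun t ht => ((hFderiv t ht).continuousAt).continuousWithinAt
  have hψcI : ContinuousOn ψ (Ioo (-R) R) := hψc.mono Ioo_subset_Icc_self
  have hG'c : ContinuousOn G' (Ioo (-R) R) := by
    rw [hG'def]
    apply ContinuousOn.neg
    apply ContinuousOn.div
    · fun_prop
    · fun_prop
    · exact fun t ht => pow_ne_zero 2 (hu t ht).ne'
  have hG'int : IntegrableOn G' (Ioo (-R) R) :=
    wp_integrableOn_of_bdd measurableSet_Ioo hvol
      (hG'c.aestronglyMeasurable measurableSet_Ioo) hG'b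
  have hF2uc : ContinuousOn (fun t => F t ^ 2 / (R ^ 2 - t ^ 2)) (Ioo (-R) R) := by
    apply ContinuousOn.div
    · fun_prop
    · fun_prop
    · exact fun t ht => (hu t ht).ne'
  have hF2uint : IntegrableOn (fun t => F t ^ 2 / (R ^ 2 - t ^ 2)) (Ioo (-R) R) := by
    apply wp_integrableOn_of_bdd measurableSet_Ioo hvol
      (hF2uc.aestronglyMeasurable measurableSet_Ioo) (M := Cψ ^ 2)
    intro t ht
    rw [abs_of_nonneg (div_nonneg (sq_nonneg _) (hu t ht).le)]
    exact hF2u t ht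
  have hFd'int : IntegrableOn (fun t => F t * φ' t) (Ioo (-R) R) := by
    apply wp_integrableOn_of_bdd measurableSet_Ioo hvol
      ((hFc.mul (hcont.mono Ioo_subset_Icc_self)).aestronglyMeasurable measurableSet_Ioo)
      (M := Cψ * (2 * R) * Cd)
    intro t ht
    rw [Pi.mul_apply, abs_mul]
    have h1 := hFb1 t (Ioo_subset_Icc_self ht)
    have h2 := hCd t (Ioo_subset_Icc_self ht)
    have h3 : |F t| ≤ Cψ * (2 * R) := h1.trans (by nlinarith [ht.1, ht.2])
    exact mul_le_mul h3 h2 (abs_nonneg _) (by positivity)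
  have hψφeq : ∀ t : ℝ, ψ t * φ t = ψ t ^ 2 + m * ψ t := by
    intro t; simp only [hψdef]; ring
  have hsum := hψ2.add (hψint.const_mul m)
  have hψφint : IntegrableOn (fun t => ψ t * φ t) (Ioo (-R) R) := by
    apply IntegrableOn.congr_fun hsum _ measurableSet_Ioo
    intro x hx
    simp only [Pi.add_apply]
    exact (hψφeq x).symm
  have hψφval : ∫ t in Ioo (-R) R, ψ t * φ t = ∫ t in Ioo (-R) R, ψ t ^ 2 := by
    rw [setIntegral_congr_fun measurableSet_Ioo (fun x _ => hψφeq x),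
      integral_add hψ2 (hψint.const_mul m), integral_const_mul, hψ0]
    ring
  -- exhausting sequence of intervals
  obtain ⟨a, hadef⟩ : ∃ a : ℕ → ℝ, a = fun n : ℕ => -R + R / (n + 2) := ⟨_, rfl⟩
  obtain ⟨b, hbdef⟩ : ∃ b : ℕ → ℝ, b = fun n : ℕ => R - R / (n + 2) := ⟨_, rfl⟩
  have heps : ∀ n : ℕ, 0 < R / ((n : ℝ) + 2) ∧ R / ((n : ℝ) + 2) ≤ R / 2 := by
    intro n
    refine ⟨by positivity, ?_⟩
    apply div_le_div_of_nonneg_left hR.le (by norm_num)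
    have : (0:ℝ) ≤ n := Nat.cast_nonneg n
    linarith
  have hab : ∀ n : ℕ, a n ≤ -(R/2) ∧ R/2 ≤ b n ∧ -R < a n ∧ b n < R ∧ a n ≤ b n := by
    intro n
    obtain ⟨h1, h2⟩ := heps n
    simp only [hadef, hbdef]
    refine ⟨by linarith, by linarith, by linarith, by linarith, by linarith⟩
  have habIcc : ∀ n : ℕ, Icc (a n) (b n) ⊆ Ioo (-R) R := by
    intro n x hx
    exact ⟨lt_of_lt_of_le (hab n).2.2.1 hx.1, lt_of_le_of_lt hx.2 (hab n).2.2.2.1⟩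
  have habuIcc : ∀ n : ℕ, uIcc (a n) (b n) ⊆ Ioo (-R) R := by
    intro n
    rw [uIcc_of_le (hab n).2.2.2.2]
    exact habIcc n
  have hmono : Monotone (fun n : ℕ => Ioo (a n) (b n)) := by
    intro p q hpq
    have hd : R / ((q:ℝ) + 2) ≤ R / ((p:ℝ) + 2) := by
      apply div_le_div_of_nonneg_left hR.le (by positivity)
      have : (p:ℝ) ≤ q := Nat.cast_le.2 hpq
      linarith
    apply Ioo_subset_Ioo
    · simp only [hadef]; linarith
    · simp only [hbdef]; linarith
  have hunion : (⋃ n, Ioo (a n) (b n)) = Ioo (-R) R := by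
    apply Subset.antisymm
    · exact iUnion_subset fun n => Ioo_subset_Ioo (hab n).2.2.1.le (hab n).2.2.2.1.le
    · intro x hx
      have hε : 0 < min (x + R) (R - x) := lt_min (by linarith [hx.1]) (by linarith [hx.2])
      obtain ⟨n, hn⟩ := exists_nat_gt (R / min (x + R) (R - x))
      have h1 : R / ((n:ℝ) + 2) < min (x + R) (R - x) := by
        rw [div_lt_iff₀ (by positivity)]
        rw [div_lt_iff₀ hε] at hn
        nlinarith [hε, min_le_left (x+R) (R-x)]
      refine mem_iUnion.2 ⟨n, ?_, ?_⟩
      · simp only [hadef]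
        have := min_le_left (x + R) (R - x)
        linarith
      · simp only [hbdef]
        have := min_le_right (x + R) (R - x)
        linarith
  have htend : ∀ f : ℝ → ℝ, IntegrableOn f (Ioo (-R) R) →
      Tendsto (fun n => ∫ x in a n..b n, f x) atTop (𝓝 (∫ x in Ioo (-R) R, f x)) := by
    intro f hf
    have h := tendsto_setIntegral_of_monotone (fun n : ℕ => measurableSet_Ioo)
      hmono (hunion ▸ hf)
    rw [hunion] at h
    apply h.congr
    intro n
    rw [intervalIntegral.integral_of_le (hab n).2.2.2.2, integral_Ioc_eq_integral_Ioo]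
  have htend0 : Tendsto (fun n : ℕ => R / ((n:ℝ) + 2)) atTop (𝓝 0) := by
    have h := (tendsto_const_div_atTop_nhds_zero_nat R).comp (tendsto_add_atTop_nat 2)
    apply h.congr
    intro n
    simp only [Function.comp]
    push_cast
    ring_nf
  have hanIoo : ∀ n, a n ∈ Ioo (-R) R := fun n => habIcc n ⟨le_refl _, (hab n).2.2.2.2⟩
  have hbnIoo : ∀ n, b n ∈ Ioo (-R) R := fun n => habIcc n ⟨(hab n).2.2.2.2, le_refl _⟩
  have haR : ∀ n : ℕ, a n + R = R / ((n:ℝ) + 2) := by intro n; simp only [hadef]; ring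
  have hbR : ∀ n : ℕ, R - b n = R / ((n:ℝ) + 2) := by intro n; simp only [hbdef]; ring
  -- integration by parts identity
  have hpartsn : ∀ n : ℕ, ∫ x in a n..b n, F x * φ' x
      = F (b n) * φ (b n) - F (a n) * φ (a n) - ∫ x in a n..b n, ψ x * φ x := by
    intro n
    apply intervalIntegral.integral_mul_deriv_eq_deriv_mul
    · exact fun x hx => hFderiv x (habuIcc n hx)
    · exact fun x hx => hderiv x (Ioo_subset_Icc_self (habuIcc n hx))
    · exact (hψc.mono ((habuIcc n).trans Ioo_subset_Icc_self)).intervalIntegrable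
    · exact (hcont.mono ((habuIcc n).trans Ioo_subset_Icc_self)).intervalIntegrable
  have hFbn0 : Tendsto (fun n => F (b n) * φ (b n)) atTop (𝓝 0) := by
    have hs : ∀ n : ℕ, ‖F (b n) * φ (b n)‖ ≤ Cψ * Cp * (R / ((n:ℝ) + 2)) := by
      intro n
      rw [norm_mul]
      have h1 : ‖F (b n)‖ ≤ Cψ * (R / ((n:ℝ) + 2)) := by
        rw [Real.norm_eq_abs, ← hbR n]
        exact hFb2 _ (Ioo_subset_Icc_self (hbnIoo n))
      have h2 : ‖φ (b n)‖ ≤ Cp := hCp _ (Ioo_subset_Icc_self (hbnIoo n))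
      calc ‖F (b n)‖ * ‖φ (b n)‖ ≤ (Cψ * (R / ((n:ℝ) + 2))) * Cp :=
            mul_le_mul h1 h2 (norm_nonneg _) (by positivity)
        _ = Cψ * Cp * (R / ((n:ℝ) + 2)) := by ring
    exact squeeze_zero_norm hs (by simpa using htend0.const_mul (Cψ * Cp))
  have hFan0 : Tendsto (fun n => F (a n) * φ (a n)) atTop (𝓝 0) := by
    have hs : ∀ n : ℕ, ‖F (a n) * φ (a n)‖ ≤ Cψ * Cp * (R / ((n:ℝ) + 2)) := by
      intro n
      rw [norm_mul]
      have h1 : ‖F (a n)‖ ≤ Cψ * (R / ((n:ℝ) + 2)) := by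
        rw [Real.norm_eq_abs, ← haR n]
        exact hFb1 _ (Ioo_subset_Icc_self (hanIoo n))
      have h2 : ‖φ (a n)‖ ≤ Cp := hCp _ (Ioo_subset_Icc_self (hanIoo n))
      calc ‖F (a n)‖ * ‖φ (a n)‖ ≤ (Cψ * (R / ((n:ℝ) + 2))) * Cp :=
            mul_le_mul h1 h2 (norm_nonneg _) (by positivity)
        _ = Cψ * Cp * (R / ((n:ℝ) + 2)) := by ring
    exact squeeze_zero_norm hs (by simpa using htend0.const_mul (Cψ * Cp))
  have hX1 : ∫ t in Ioo (-R) R, F t * φ' t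
      = 0 - 0 - ∫ t in Ioo (-R) R, ψ t * φ t := by
    refine tendsto_nhds_unique (htend _ hFd'int) ?_
    exact (((hFbn0.sub hFan0).sub (htend _ hψφint)).congr fun n => (hpartsn n).symm)
  -- FTC for G'
  have hGn : ∀ n : ℕ, ∫ x in a n..b n, G' x = G (b n) - G (a n) := by
    intro n
    apply intervalIntegral.integral_eq_sub_of_hasDerivAt
    · exact fun x hx => hGderiv x (habuIcc n hx)
    · exact (hG'c.mono (habuIcc n)).intervalIntegrable
  have hGbn0 : Tendsto (fun n => G (b n)) atTop (𝓝 0) := by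
    have hs : ∀ n : ℕ, ‖G (b n)‖ ≤ 2 * Cψ ^ 2 * (R / ((n:ℝ) + 2)) := by
      intro n
      rw [Real.norm_eq_abs, ← hbR n]
      exact hGb2 _ (hbnIoo n) (by linarith [(hab n).2.1])
    exact squeeze_zero_norm hs (by simpa using htend0.const_mul (2 * Cψ ^ 2))
  have hGan0 : Tendsto (fun n => G (a n)) atTop (𝓝 0) := by
    have hs : ∀ n : ℕ, ‖G (a n)‖ ≤ 2 * Cψ ^ 2 * (R / ((n:ℝ) + 2)) := by
      intro n
      rw [Real.norm_eq_abs, ← haR n]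
      exact hGb1 _ (hanIoo n) (by linarith [(hab n).1])
    exact squeeze_zero_norm hs (by simpa using htend0.const_mul (2 * Cψ ^ 2))
  have hG'0 : ∫ t in Ioo (-R) R, G' t = 0 := by
    have h := tendsto_nhds_unique (htend _ hG'int)
      ((hGbn0.sub hGan0).congr fun n => (hGn n).symm)
    simpa using h
  -- Hardy-type estimate
  have hhalfint : IntegrableOn (fun t => ψ t ^ 2 / 2) (Ioo (-R) R) := hψ2.div_const 2
  have hJ : ∫ t in Ioo (-R) R, F t ^ 2 / (R ^ 2 - t ^ 2)
      ≤ (∫ t in Ioo (-R) R, ψ t ^ 2) / 2 := by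
    have h := setIntegral_mono_on hF2uint (hhalfint.sub hG'int) measurableSet_Ioo hpt
    simp only [Pi.sub_apply] at h
    rwa [integral_sub hhalfint hG'int, hG'0, sub_zero, integral_div] at h
  -- AM-GM pointwise and conclusion
  have hAM : ∀ t ∈ Ioo (-R) R, -(F t * φ' t)
      ≤ F t ^ 2 / (R ^ 2 - t ^ 2) + (R ^ 2 - t ^ 2) * φ' t ^ 2 / 4 := by
    intro t ht
    have hut := hu t ht
    have key : F t ^ 2 / (R ^ 2 - t ^ 2) + (R ^ 2 - t ^ 2) * φ' t ^ 2 / 4 + F t * φ' t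
        = (F t + (R ^ 2 - t ^ 2) * φ' t / 2) ^ 2 / (R ^ 2 - t ^ 2) := by
      field_simp
      ring
    have hnn : 0 ≤ (F t + (R ^ 2 - t ^ 2) * φ' t / 2) ^ 2 / (R ^ 2 - t ^ 2) :=
      div_nonneg (sq_nonneg _) hut.le
    linarith
  have hXle : ∫ t in Ioo (-R) R, -(F t * φ' t)
      ≤ ∫ t in Ioo (-R) R, (F t ^ 2 / (R ^ 2 - t ^ 2) + (R ^ 2 - t ^ 2) * φ' t ^ 2 / 4) :=
    setIntegral_mono_on hFd'int.neg (hF2uint.add (hw.div_const 4)) measurableSet_Ioo hAM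
  rw [integral_neg, integral_add hF2uint (hw.div_const 4), integral_div] at hXle
  rw [hψφval] at hX1
  have hfinal : ∫ w in Ioo (-R) R, ψ w ^ 2
      ≤ (1 / 2) * ∫ w in Ioo (-R) R, (R ^ 2 - w ^ 2) * φ' w ^ 2 := by
    have hXval : ∫ t in Ioo (-R) R, ψ t ^ 2 = -∫ t in Ioo (-R) R, F t * φ' t := by
      linarith [hX1]
    linarith [hJ, hXle, hXval]
  simpa [hψdef] using hfinal
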